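/- A code C ⊆ Z_q^n can correct t insertions of blocks 0^k if and only if it can correct any combination of t_ins insertions and t_del deletions of blocks 0^k with t_ins + t_del ≤ t. -/

import Mathlib

/-- One insertion of a block `0^k` at some position of the string `x`. -/
def Ins (q k : ℕ) (x y : List (ZMod q)) : Prop :=
  ∃ j ≤ x.length, y = x.take j ++ List.replicate k (0 : ZMod q) ++ x.drop j

/-- One deletion of a block of `k` consecutive zeros. -/
def Del (q k : ℕ) (x y : List (ZMod q)) : Prop := Ins q k y x

/-- `IndelN q k a b x y`: `y` is obtainable from `x` by `a` insertions and `b`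
deletions of blocks `0^k`, performed in any order. -/
inductive IndelN (q k : ℕ) : ℕ → ℕ → List (ZMod q) → List (ZMod q) → Prop
  | refl (x : List (ZMod q)) : IndelN q k 0 0 x x
  | ins {a b : ℕ} {x z y : List (ZMod q)} :
      Ins q k x z → IndelN q k a b z y → IndelN q k (a + 1) b x y
  | del {a b : ℕ} {x z y : List (ZMod q)} :
      Del q k x z → IndelN q k a b z y → IndelN q k a (b + 1) x y

/-- `C` corrects `t` insertions of blocks `0^k`. -/
def CorrectsIns (q k t : ℕ) (C : Set (List (ZMod q))) : Prop :=
  ∀ x ∈ C, ∀ x' ∈ C, ∀ y,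
    (∃ u ≤ t, IndelN q k u 0 x y) → (∃ u' ≤ t, IndelN q k u' 0 x' y) → x = x'

/-- `C` corrects any combination of `t_ins` insertions and `t_del` deletions of
blocks `0^k` with `t_ins + t_del ≤ t`. -/
def CorrectsIndel (q k t : ℕ) (C : Set (List (ZMod q))) : Prop :=
  ∀ x ∈ C, ∀ x' ∈ C, ∀ y,
    (∃ a b, a + b ≤ t ∧ IndelN q k a b x y) →
    (∃ a b, a + b ≤ t ∧ IndelN q k a b x' y) → x = x'

/-! ### Auxiliary lemmas -/

/-- `Ins` in terms of an append decomposition. -/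
lemma ins_iff {q k : ℕ} {x y : List (ZMod q)} :
    Ins q k x y ↔ ∃ s t : List (ZMod q),
      x = s ++ t ∧ y = s ++ List.replicate k (0 : ZMod q) ++ t := by
  constructor
  · rintro ⟨j, hj, rfl⟩
    exact ⟨x.take j, x.drop j, (List.take_append_drop j x).symm, rfl⟩
  · rintro ⟨s, t, rfl, rfl⟩
    refine ⟨s.length, by simp, ?_⟩
    simp [List.take_left, List.drop_left]

/-- Diamond property for single insertions. -/
lemma ins_diamond {q k : ℕ} {u x y : List (ZMod q)}
    (hx : Ins q k u x) (hy : Ins q k u y) :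
    ∃ w, Ins q k x w ∧ Ins q k y w := by
  rw [ins_iff] at hx hy
  obtain ⟨s1, t1, h1, rfl⟩ := hx
  obtain ⟨s2, t2, h2, rfl⟩ := hy
  set B := List.replicate k (0 : ZMod q) with hB
  rw [h1] at h2
  rcases List.append_eq_append_iff.mp h2 with ⟨m, hm1, hm2⟩ | ⟨m, hm1, hm2⟩
  · -- s2 = s1 ++ m, t1 = m ++ t2
    subst hm1; subst hm2
    refine ⟨s1 ++ B ++ m ++ B ++ t2, ?_, ?_⟩
    · rw [ins_iff]; exact ⟨s1 ++ B ++ m, t2, by simp, by simp [hB]⟩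
    · rw [ins_iff]; exact ⟨s1, m ++ B ++ t2, by simp, by simp [hB]⟩
  · -- s1 = s2 ++ m, t2 = m ++ t1
    subst hm1; subst hm2
    refine ⟨s2 ++ B ++ m ++ B ++ t1, ?_, ?_⟩
    · rw [ins_iff]; exact ⟨s2, m ++ B ++ t1, by simp, by simp [hB]⟩
    · rw [ins_iff]; exact ⟨s2 ++ B ++ m, t1, by simp, by simp [hB]⟩

/-- Transitivity of `IndelN`. -/
lemma indelN_trans {q k : ℕ} : ∀ {a b c d : ℕ} {x z w : List (ZMod q)},
    IndelN q k a b x z → IndelN q k c d z w → IndelN q k (a + c) (b + d) x w := by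
  intro a b c d x z w h1
  induction h1 generalizing c d w with
  | refl x => intro h2; simpa using h2
  | ins hins _ ih =>
      intro h2
      have := IndelN.ins hins (ih h2)
      rwa [Nat.add_right_comm]
  | del hdel _ ih =>
      intro h2
      have := IndelN.del hdel (ih h2)
      simpa [Nat.add_right_comm] using this

lemma indelN_single_ins {q k : ℕ} {x y : List (ZMod q)} (h : Ins q k x y) :
    IndelN q k 1 0 x y := IndelN.ins h (IndelN.refl y)

/-- Appending one insertion at the end of a sequence of insertions. -/
lemma insN_snoc {q k : ℕ} {m : ℕ} {x z w : List (ZMod q)}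
    (h1 : IndelN q k m 0 x z) (h2 : Ins q k z w) : IndelN q k (m + 1) 0 x w := by
  simpa using indelN_trans h1 (indelN_single_ins h2)

/-- Strip lemma: one insertion vs. a sequence of insertions. -/
lemma ins_strip {q k : ℕ} : ∀ {m b : ℕ} {u z : List (ZMod q)},
    IndelN q k m b u z → b = 0 → ∀ x, Ins q k u x →
      ∃ w, IndelN q k m 0 x w ∧ Ins q k z w := by
  intro m b u z h
  induction h with
  | refl u =>
      intro _ x hx
      exact ⟨x, IndelN.refl x, hx⟩
  | ins hins _ ih =>
      intro hb x hx
      obtain ⟨p, hp1, hp2⟩ := ins_diamond hx hins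
      obtain ⟨w, hw1, hw2⟩ := ih hb p hp2
      exact ⟨w, IndelN.ins hp1 hw1, hw2⟩
  | del _ _ _ =>
      intro hb; omega

/-- Confluence of sequences of insertions. -/
lemma ins_confluence {q k : ℕ} : ∀ {m b : ℕ} {u x : List (ZMod q)},
    IndelN q k m b u x → b = 0 → ∀ {m' : ℕ} {z : List (ZMod q)},
    IndelN q k m' 0 u z → ∃ w, IndelN q k m' 0 x w ∧ IndelN q k m 0 z w := by
  intro m b u x h
  induction h with
  | refl u =>
      intro _ m' z h2
      exact ⟨z, h2, IndelN.refl z⟩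
  | ins hins _ ih =>
      intro hb m' z h2
      obtain ⟨p, hp1, hp2⟩ := ins_strip h2 rfl _ hins
      obtain ⟨w, hw1, hw2⟩ := ih hb hp1
      exact ⟨w, hw1, IndelN.ins hp2 hw2⟩
  | del _ _ _ =>
      intro hb; omega

/-- Normalization: a mixed indel path from `x` to `y` yields a common string
reachable by pure insertions from both `x` and `y`. -/
lemma indelN_normalize {q k : ℕ} : ∀ {a b : ℕ} {x y : List (ZMod q)},
    IndelN q k a b x y → ∃ z, IndelN q k a 0 x z ∧ IndelN q k b 0 y z := by
  intro a b x y h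
  induction h with
  | refl x => exact ⟨x, IndelN.refl x, IndelN.refl x⟩
  | ins hins _ ih =>
      obtain ⟨z, hz1, hz2⟩ := ih
      exact ⟨z, IndelN.ins hins hz1, hz2⟩
  | del hdel _ ih =>
      obtain ⟨z, hz1, hz2⟩ := ih
      obtain ⟨w, hw1, hw2⟩ := ins_strip hz1 rfl _ hdel
      exact ⟨w, hw1, insN_snoc hz2 hw2⟩

lemma ins_length {q k : ℕ} {x y : List (ZMod q)} (h : Ins q k x y) :
    y.length = x.length + k := by
  obtain ⟨j, hj, rfl⟩ := h
  simp
  omega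

lemma indelN_length {q k : ℕ} : ∀ {a b : ℕ} {x y : List (ZMod q)},
    IndelN q k a b x y → y.length + b * k = x.length + a * k := by
  intro a b x y h
  induction h with
  | refl x => simp
  | ins hins _ ih =>
      have := ins_length hins
      rw [this] at ih
      rw [Nat.add_mul]
      omega
  | del hdel _ ih =>
      have := ins_length hdel
      rw [Nat.add_mul]
      omega

/-- a code `C ⊆ (ℤ_q)^n` corrects `t` insertions of blocks `0^k`
iff it corrects any combination of insertions and deletions of blocks `0^k`
with at most `t` errors in total. -/
theorem stmt4 (q n t k : ℕ) (hq : 2 ≤ q) (hn : 1 ≤ n) (ht : 1 ≤ t) (hk : 1 ≤ k)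
    (C : Set (List (ZMod q))) (hC : ∀ x ∈ C, x.length = n) :
    CorrectsIns q k t C ↔ CorrectsIndel q k t C := by
  constructor
  · intro h x hx x' hx' y ⟨a, b, hab, h1⟩ ⟨a', b', hab', h2⟩
    -- normalize both paths
    obtain ⟨z, hz1, hz2⟩ := indelN_normalize h1
    obtain ⟨z', hz1', hz2'⟩ := indelN_normalize h2
    -- confluence at y
    obtain ⟨w, hw1, hw2⟩ := ins_confluence hz2 rfl hz2'
    -- x → z → w by a + b' insertions, x' → z' → w by a' + b insertions
    have hxw : IndelN q k (a + b') 0 x w := by simpa using indelN_trans hz1 hw1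
    have hx'w : IndelN q k (a' + b) 0 x' w := by simpa using indelN_trans hz1' hw2
    -- length counting: a + b' = a' + b
    have l1 := indelN_length h1
    have l2 := indelN_length h2
    rw [hC x hx] at l1
    rw [hC x' hx'] at l2
    have hk' : k * (a + b') = k * (a' + b) := by ring_nf; nlinarith [l1, l2]
    have heq : a + b' = a' + b := Nat.eq_of_mul_eq_mul_left (by omega) hk'
    have hle : a + b' ≤ t := by omega
    exact h x hx x' hx' w ⟨a + b', hle, hxw⟩ ⟨a' + b, by omega, hx'w⟩
  · intro h x hx x' hx' y ⟨u, hu, h1⟩ ⟨u', hu', h2⟩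
    exact h x hx x' hx' y ⟨u, 0, by omega, h1⟩ ⟨u', 0, by omega, h2⟩
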